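/- Let K ∈ ℝ_{>0}^{R1×R2} be entrywise positive, let μ ∈ ℝ_{>0}^{R1} and ν ∈ ℝ_{>0}^{R2} be entrywise positive, and let (u*, v*) be positive vectors satisfying u* = μ ./ (K v*) and v* = ν ./ (Kᵀ u*). Define one full Sinkhorn iteration by u⁺ = μ ./ (K v) and v⁺ = ν ./ (Kᵀ u⁺). Then for any entrywise positive v, d_HP(v⁺, v*) ≤ κ(K)² · d_HP(v, v*), where d_HP is the Hilbert projective metric and κ(K) the Birkhoff contraction constant of K. -/

import Mathlib

noncomputable section

/-- The Hilbert projective metric `d_HP(x,y) = log max_{i,j} (x_i y_j)/(x_j y_i)`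
on entrywise positive vectors. -/
def dHP {R : ℕ} (x y : Fin R → ℝ) : ℝ :=
  Real.log (⨆ i, ⨆ j, x i * y j / (x j * y i))

/-- `ψ(K) = max_{i,j,k,l} (K_{ik} K_{jl})/(K_{jk} K_{il})` for a positive matrix `K`. -/
def psiK {R1 R2 : ℕ} (K : Matrix (Fin R1) (Fin R2) ℝ) : ℝ :=
  ⨆ i, ⨆ j, ⨆ k, ⨆ l, K i k * K j l / (K j k * K i l)

/-- The Birkhoff contraction constant `κ(K) = (√ψ(K) - 1)/(√ψ(K) + 1)`. -/
def kappaK {R1 R2 : ℕ} (K : Matrix (Fin R1) (Fin R2) ℝ) : ℝ :=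
  (Real.sqrt (psiK K) - 1) / (Real.sqrt (psiK K) + 1)



lemma core_st (u w s t : ℝ) (hu : 1 ≤ u) (hw : 1 ≤ w) (hs : 0 ≤ s) (ht : 0 ≤ t)
    (hst : s ≤ w^2 * t) :
    (u+w)^2*((u^2*s+1)*(t+1)) ≤ (u*w+1)^2*((u^2*t+1)*(s+1)) := by
  have hu2 : (0:ℝ) ≤ u^2 - 1 := by nlinarith
  have hw2 : (0:ℝ) ≤ w^2 - 1 := by nlinarith
  have hwt : (0:ℝ) < w^2*t + 1 := by nlinarith
  have step1 : (u+w)^2*((u^2*s+1)*(w^2*t+1)) ≤ (u+w)^2*((u^2*w^2*t+1)*(s+1)) := by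
    have h : (u^2*s+1)*(w^2*t+1) ≤ (u^2*w^2*t+1)*(s+1) := by nlinarith [mul_nonneg hu2 (sub_nonneg.2 hst)]
    have : (0:ℝ) ≤ (u+w)^2 := sq_nonneg _
    nlinarith [mul_le_mul_of_nonneg_left h this]
  have step2 : (u+w)^2*((u^2*w^2*t+1)*(t+1)) ≤ (u*w+1)^2*((u^2*t+1)*(w^2*t+1)) := by
    nlinarith [mul_nonneg (mul_nonneg hu2 hw2) (sq_nonneg (u*w*t - 1))]
  -- multiply step1 by (t+1) ≥ 0, step2 by (s+1) ≥ 0, divide by (w^2*t+1)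
  have h1 := mul_le_mul_of_nonneg_right step1 (by linarith : (0:ℝ) ≤ t+1)
  have h2 := mul_le_mul_of_nonneg_right step2 (by linarith : (0:ℝ) ≤ s+1)
  have key : ((u+w)^2*((u^2*s+1)*(t+1))) * (w^2*t+1) ≤ ((u*w+1)^2*((u^2*t+1)*(s+1))) * (w^2*t+1) := by
    nlinarith [h1, h2]
  exact le_of_mul_le_mul_right key hwt


lemma log_ratio_le (u w : ℝ) (hu : 1 ≤ u) (hw : 1 ≤ w) :
    Real.log ((u*w+1)/(u+w)) ≤ (w-1)/(w+1) * Real.log u := by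
  have hu0 : (0:ℝ) < u := by linarith
  rcases eq_or_lt_of_le hw with hw1 | hw1
  · rw [← hw1]
    have : (u*1+1)/(u+1) = 1 := by rw [mul_one]; exact div_self (by positivity)
    rw [this, Real.log_one]
    simp
  rcases eq_or_lt_of_le hu with hu1 | hu1
  · rw [← hu1]
    have : ((1:ℝ)*w+1)/(1+w) = 1 := by rw [one_mul, add_comm]; exact div_self (by positivity)
    rw [this, Real.log_one]; simp
  -- main case 1 < u, 1 < w
  set κ := (w-1)/(w+1) with hκ
  have hwpos : (0:ℝ) < w + 1 := by linarith
  set f : ℝ → ℝ := fun x => κ * Real.log x + Real.log (x+w) - Real.log (x*w+1) with hf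
  have hmono : StrictMonoOn f (Set.Ici (1:ℝ)) := by
    apply strictMonoOn_of_deriv_pos (convex_Ici 1)
    · apply ContinuousOn.sub
      apply ContinuousOn.add
      · exact (continuousOn_const.mul (Real.continuousOn_log.comp continuousOn_id (fun x hx => by
          simp at hx ⊢; nlinarith)))
      · exact Real.continuousOn_log.comp (continuousOn_id.add continuousOn_const) (fun x hx => by
          simp at hx ⊢; nlinarith)
      · exact Real.continuousOn_log.comp ((continuousOn_id.mul continuousOn_const).add continuousOn_const) (fun x hx => by
          simp at hx ⊢; nlinarith)
    · intro x hx
      rw [interior_Ici] at hx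
      have hx1 : (1:ℝ) < x := hx
      have hx0 : (0:ℝ) < x := by linarith
      have hxw : (0:ℝ) < x*w+1 := by nlinarith
      have hxw2 : (0:ℝ) < x+w := by linarith
      have h1 : HasDerivAt f (κ * (1/x) + 1/(x+w) - w/(x*w+1)) x := by
        have d1 : HasDerivAt (fun y : ℝ => κ * Real.log y) (κ * (1/x)) x := by
          simpa [one_div] using (Real.hasDerivAt_log (ne_of_gt hx0)).const_mul κ
        have d2 : HasDerivAt (fun y : ℝ => Real.log (y+w)) (1/(x+w)) x := by
          have := (((hasDerivAt_id x).add_const w).log (ne_of_gt hxw2))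
          simpa [one_div] using this
        have d3 : HasDerivAt (fun y : ℝ => Real.log (y*w+1)) (w/(x*w+1)) x := by
          have := (((hasDerivAt_id x).mul_const w).add_const 1).log (ne_of_gt hxw)
          simpa using this
        exact (d1.add d2).sub d3
      rw [h1.deriv]
      have hid : κ * (1/x) + 1/(x+w) - w/(x*w+1)
          = ((w-1)*w*(x-1)^2)/((w+1)*x*((x*w+1)*(x+w))) := by
        rw [hκ]; field_simp; ring
      rw [hid]
      have hw0 : (0:ℝ) < w - 1 := by linarith
      have hsq : (0:ℝ) < (x-1)^2 := by nlinarith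
      exact div_pos (mul_pos (mul_pos hw0 (by linarith : (0:ℝ) < w)) hsq) (mul_pos (mul_pos hwpos hx0) (mul_pos hxw hxw2))
  have h := hmono (Set.mem_Ici.2 le_rfl) (Set.mem_Ici.2 hu) hu1
  have hf1 : f 1 = 0 := by
    simp [hf, add_comm, mul_comm]
  rw [hf1] at h
  have hupos : (0:ℝ) < u + w := by linarith
  rw [Real.log_div (by positivity) (ne_of_gt hupos)]
  simp only [hf] at h
  linarith


lemma sq_ratio_le_rpow (u w : ℝ) (hu : 1 ≤ u) (hw : 1 ≤ w) :
    ((u*w+1)/(u+w))^2 ≤ (u^2) ^ ((w-1)/(w+1)) := by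
  have h0 : (0:ℝ) < u + w := by linarith
  have h1 : (0:ℝ) < (u*w+1)/(u+w) := by
    apply div_pos <;> nlinarith
  have h2 : (0:ℝ) < u^2 := by nlinarith
  rw [Real.le_rpow_iff_log_le (by positivity) h2]
  rw [Real.log_pow]
  have h4 : Real.log (u^2) = 2 * Real.log u := by
    rw [sq, Real.log_mul (by linarith) (by linarith)]; ring
  rw [h4]
  have h3 := log_ratio_le u w hu hw
  push_cast
  nlinarith [h3]

lemma core_hom (u w A A' B B' : ℝ) (hu : 1 ≤ u) (hw : 1 ≤ w)
    (hA : 0 ≤ A) (hA' : 0 ≤ A') (hB : 0 ≤ B) (hB' : 0 ≤ B')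
    (hAA : 0 < A + A') (hBB : 0 < B + B') (hcon : A * B' ≤ w^2 * (A' * B)) :
    (u+w)^2 * ((u^2*A+A')*(B+B')) ≤ (u*w+1)^2 * ((u^2*B+B')*(A+A')) := by
  have huw : (u+w)^2 ≤ (u*w+1)^2 := by
    nlinarith [mul_nonneg (mul_nonneg (by linarith : (0:ℝ) ≤ u - 1) (by linarith : (0:ℝ) ≤ w - 1))
      (by nlinarith : (0:ℝ) ≤ u*w+1+u+w)]
  have hu2 : (1:ℝ) ≤ u^2 := by nlinarith
  rcases eq_or_lt_of_le hA' with hA'0 | hA'pos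
  · have hA0 : 0 < A := by rw [← hA'0] at hAA; linarith
    have hB'0 : B' = 0 := by
      by_contra hB'ne
      have h1 : 0 < A * B' := mul_pos hA0 (lt_of_le_of_ne hB' (Ne.symm hB'ne))
      rw [← hA'0] at hcon
      nlinarith
    have hB0 : 0 < B := by rw [hB'0] at hBB; linarith
    rw [← hA'0, hB'0]
    have hq : (0:ℝ) < u^2 * A * B := by positivity
    nlinarith [mul_le_mul_of_nonneg_right huw (le_of_lt hq)]
  rcases eq_or_lt_of_le hB' with hB'0 | hB'pos
  · have hB0 : 0 < B := by rw [← hB'0] at hBB; linarith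
    rw [← hB'0]
    have h2 : (u^2*A+A')*(B+0) ≤ (u^2*(A+A'))*B := by
      have : A' ≤ u^2 * A' := by nlinarith
      nlinarith
    have h3 : (0:ℝ) ≤ (u^2*(A+A'))*B := by positivity
    calc (u+w)^2 * ((u^2*A+A')*(B+0)) ≤ (u*w+1)^2 * ((u^2*(A+A'))*B) :=
          mul_le_mul huw h2 (mul_nonneg (add_nonneg (mul_nonneg (sq_nonneg u) hA) hA') (by linarith)) (by positivity)
      _ = (u*w+1)^2 * ((u^2*B+0)*(A+A')) := by ring
  -- main case A' > 0, B' > 0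
  set s := A / A' with hs
  set t := B / B' with ht
  have hsA : A = s * A' := by rw [hs, div_mul_cancel₀ A (ne_of_gt hA'pos)]
  have htB : B = t * B' := by rw [ht, div_mul_cancel₀ B (ne_of_gt hB'pos)]
  have hs0 : 0 ≤ s := div_nonneg hA hA'pos.le
  have ht0 : 0 ≤ t := div_nonneg hB hB'pos.le
  have hst : s ≤ w^2 * t := by
    rw [hs, ht, div_le_iff₀ hA'pos,
      show w^2*(B/B')*A' = (w^2*(A'*B))/B' by field_simp, le_div_iff₀ hB'pos]
    exact hcon
  have hcore := core_st u w s t hu hw hs0 ht0 hst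
  have hprod : (0:ℝ) ≤ A' * B' := mul_nonneg hA'pos.le hB'pos.le
  calc (u+w)^2 * ((u^2*A+A')*(B+B')) = ((u+w)^2*((u^2*s+1)*(t+1))) * (A'*B') := by
        rw [hsA, htB]; ring
    _ ≤ ((u*w+1)^2*((u^2*t+1)*(s+1))) * (A'*B') := mul_le_mul_of_nonneg_right hcore hprod
    _ = (u*w+1)^2 * ((u^2*B+B')*(A+A')) := by rw [hsA, htB]; ring
lemma le_fin_iSup {ι : Type*} [Finite ι] (f : ι → ℝ) (i : ι) : f i ≤ ⨆ j, f j :=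
  le_ciSup (Set.Finite.bddAbove (Set.finite_range f)) i

/-- The inner sup of `dHP`. -/
def hpSup {R : ℕ} (x y : Fin R → ℝ) : ℝ := ⨆ i, ⨆ j, x i * y j / (x j * y i)

lemma dHP_eq {R : ℕ} (x y : Fin R → ℝ) : dHP x y = Real.log (hpSup x y) := rfl

lemma le_hpSup {R : ℕ} (x y : Fin R → ℝ) (i j : Fin R) :
    x i * y j / (x j * y i) ≤ hpSup x y :=
  le_trans (le_fin_iSup (fun j => x i * y j / (x j * y i)) j)
    (le_fin_iSup (fun i => ⨆ j, x i * y j / (x j * y i)) i)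

lemma hpSup_le {R : ℕ} [Nonempty (Fin R)] (x y : Fin R → ℝ) (c : ℝ)
    (h : ∀ i j, x i * y j / (x j * y i) ≤ c) : hpSup x y ≤ c :=
  ciSup_le fun i => ciSup_le fun j => h i j

lemma one_le_hpSup {R : ℕ} [Nonempty (Fin R)] (x y : Fin R → ℝ)
    (hx : ∀ i, 0 < x i) (hy : ∀ i, 0 < y i) : 1 ≤ hpSup x y := by
  obtain ⟨i⟩ := (inferInstance : Nonempty (Fin R))
  have h : x i * y i / (x i * y i) = 1 := div_self (ne_of_gt (mul_pos (hx i) (hy i)))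
  calc (1:ℝ) = x i * y i / (x i * y i) := h.symm
    _ ≤ hpSup x y := le_hpSup x y i i

lemma le_psiK {R1 R2 : ℕ} (K : Matrix (Fin R1) (Fin R2) ℝ) (i j : Fin R1) (k l : Fin R2) :
    K i k * K j l / (K j k * K i l) ≤ psiK K := by
  refine le_trans (le_fin_iSup (fun l => K i k * K j l / (K j k * K i l)) l) ?_
  refine le_trans (le_fin_iSup (fun k => ⨆ l, K i k * K j l / (K j k * K i l)) k) ?_
  refine le_trans (le_fin_iSup (fun j => ⨆ k, ⨆ l, K i k * K j l / (K j k * K i l)) j) ?_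
  exact le_fin_iSup (fun i => ⨆ j, ⨆ k, ⨆ l, K i k * K j l / (K j k * K i l)) i

lemma psiK_le {R1 R2 : ℕ} [Nonempty (Fin R1)] [Nonempty (Fin R2)]
    (K : Matrix (Fin R1) (Fin R2) ℝ) (c : ℝ)
    (h : ∀ i j k l, K i k * K j l / (K j k * K i l) ≤ c) : psiK K ≤ c :=
  ciSup_le fun i => ciSup_le fun j => ciSup_le fun k => ciSup_le fun l => h i j k l

lemma one_le_psiK {R1 R2 : ℕ} [Nonempty (Fin R1)] [Nonempty (Fin R2)]
    (K : Matrix (Fin R1) (Fin R2) ℝ) (hK : ∀ i j, 0 < K i j) : 1 ≤ psiK K := by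
  obtain ⟨i⟩ := (inferInstance : Nonempty (Fin R1))
  obtain ⟨k⟩ := (inferInstance : Nonempty (Fin R2))
  have h : K i k * K i k / (K i k * K i k) = 1 := div_self (ne_of_gt (mul_pos (hK i k) (hK i k)))
  calc (1:ℝ) = K i k * K i k / (K i k * K i k) := h.symm
    _ ≤ psiK K := le_psiK K i i k k

lemma psiK_transpose {R1 R2 : ℕ} [Nonempty (Fin R1)] [Nonempty (Fin R2)]
    (K : Matrix (Fin R1) (Fin R2) ℝ) : psiK K.transpose = psiK K := by
  apply le_antisymm
  · apply psiK_le
    intro i j k l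
    have : K.transpose i k * K.transpose j l / (K.transpose j k * K.transpose i l)
        = K k i * K l j / (K l i * K k j) := by
      simp [Matrix.transpose_apply]; ring_nf
    rw [this]
    exact le_psiK K k l i j
  · apply psiK_le
    intro i j k l
    have : K i k * K j l / (K j k * K i l)
        = K.transpose k i * K.transpose l j / (K.transpose l i * K.transpose k j) := by
      simp [Matrix.transpose_apply]; ring_nf
    rw [this]
    exact le_psiK K.transpose k l i j

lemma one_le_sqrt_psiK {R1 R2 : ℕ} [Nonempty (Fin R1)] [Nonempty (Fin R2)]
    (K : Matrix (Fin R1) (Fin R2) ℝ) (hK : ∀ i j, 0 < K i j) :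
    1 ≤ Real.sqrt (psiK K) := by
  rw [show (1:ℝ) = Real.sqrt 1 by simp]
  exact Real.sqrt_le_sqrt (one_le_psiK K hK)

lemma kappaK_nonneg {R1 R2 : ℕ} [Nonempty (Fin R1)] [Nonempty (Fin R2)]
    (K : Matrix (Fin R1) (Fin R2) ℝ) (hK : ∀ i j, 0 < K i j) : 0 ≤ kappaK K := by
  have h := one_le_sqrt_psiK K hK
  exact div_nonneg (by linarith) (by linarith)

lemma kappaK_transpose {R1 R2 : ℕ} [Nonempty (Fin R1)] [Nonempty (Fin R2)]
    (K : Matrix (Fin R1) (Fin R2) ℝ) : kappaK K.transpose = kappaK K := by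
  rw [kappaK, kappaK, psiK_transpose]

lemma hpSup_div_eq {R : ℕ} [Nonempty (Fin R)] (μ x y : Fin R → ℝ)
    (hμ : ∀ i, 0 < μ i) (hx : ∀ i, 0 < x i) (hy : ∀ i, 0 < y i) :
    hpSup (fun n => μ n / x n) (fun n => μ n / y n) = hpSup x y := by
  have key : ∀ i j, (μ i / x i) * (μ j / y j) / ((μ j / x j) * (μ i / y i))
      = x j * y i / (x i * y j) := by
    intro i j
    have h1 := hx i; have h2 := hx j; have h3 := hy i; have h4 := hy j
    have h5 := hμ i; have h6 := hμ j
    field_simp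
  apply le_antisymm
  · apply hpSup_le
    intro i j
    rw [key i j]
    exact le_hpSup x y j i
  · apply hpSup_le
    intro i j
    calc x i * y j / (x j * y i)
        = (μ j / x j) * (μ i / y i) / ((μ i / x i) * (μ j / y j)) := (key j i).symm
      _ ≤ _ := le_hpSup (fun n => μ n / x n) (fun n => μ n / y n) j i

lemma dHP_div_eq {R : ℕ} [Nonempty (Fin R)] (μ x y : Fin R → ℝ)
    (hμ : ∀ i, 0 < μ i) (hx : ∀ i, 0 < x i) (hy : ∀ i, 0 < y i) :
    dHP (fun n => μ n / x n) (fun n => μ n / y n) = dHP x y := by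
  rw [dHP_eq, dHP_eq, hpSup_div_eq μ x y hμ hx hy]

lemma dHP_nonneg {R : ℕ} [Nonempty (Fin R)] (x y : Fin R → ℝ)
    (hx : ∀ i, 0 < x i) (hy : ∀ i, 0 < y i) : 0 ≤ dHP x y := by
  rw [dHP_eq]
  exact Real.log_nonneg (one_le_hpSup x y hx hy)
lemma mulVec_apply' {R1 R2 : ℕ} (K : Matrix (Fin R1) (Fin R2) ℝ) (x : Fin R2 → ℝ) (i : Fin R1) :
    K.mulVec x i = ∑ k, K i k * x k := by
  simp [Matrix.mulVec, dotProduct]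

lemma mulVec_pos {R1 R2 : ℕ} [Nonempty (Fin R2)] (K : Matrix (Fin R1) (Fin R2) ℝ)
    (hK : ∀ i j, 0 < K i j) (x : Fin R2 → ℝ) (hx : ∀ n, 0 < x n) (i : Fin R1) :
    0 < K.mulVec x i := by
  rw [mulVec_apply']
  exact Finset.sum_pos (fun k _ => mul_pos (hK i k) (hx k)) Finset.univ_nonempty

lemma birkhoff_step {R1 R2 : ℕ} [Nonempty (Fin R1)] [Nonempty (Fin R2)]
    (K : Matrix (Fin R1) (Fin R2) ℝ) (hK : ∀ i j, 0 < K i j)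
    (x y : Fin R2 → ℝ) (hx : ∀ n, 0 < x n) (hy : ∀ n, 0 < y n) :
    dHP (K.mulVec x) (K.mulVec y) ≤ kappaK K * dHP x y := by
  set α := hpSup x y with hα
  have hα1 : 1 ≤ α := one_le_hpSup x y hx hy
  have hα0 : 0 < α := by linarith
  set κ := kappaK K with hκ
  have hκ0 : 0 ≤ κ := kappaK_nonneg K hK
  set ψ := psiK K with hψ
  have hψ1 : 1 ≤ ψ := one_le_psiK K hK
  set w := Real.sqrt ψ with hw
  have hw1 : 1 ≤ w := one_le_sqrt_psiK K hK
  have hw2 : w^2 = ψ := Real.sq_sqrt (by linarith)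
  have hKx : ∀ i, 0 < K.mulVec x i := mulVec_pos K hK x hx
  have hKy : ∀ i, 0 < K.mulVec y i := mulVec_pos K hK y hy
  -- key pointwise claim
  have claim : ∀ i j, K.mulVec x i * K.mulVec y j / (K.mulVec x j * K.mulVec y i)
      ≤ α ^ κ := by
    intro i j
    -- min and max of x k / y k
    obtain ⟨k₀, -, hk₀⟩ := Finset.exists_min_image Finset.univ (fun k => x k / y k)
      ⟨Classical.arbitrary _, Finset.mem_univ _⟩
    obtain ⟨k₁, -, hk₁⟩ := Finset.exists_max_image Finset.univ (fun k => x k / y k)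
      ⟨Classical.arbitrary _, Finset.mem_univ _⟩
    set m := x k₀ / y k₀ with hm
    set M := x k₁ / y k₁ with hM
    have hm0 : 0 < m := div_pos (hx k₀) (hy k₀)
    have hM0 : 0 < M := div_pos (hx k₁) (hy k₁)
    have hmM : m ≤ M := hk₀ k₁ (Finset.mem_univ _)
    have hglb : ∀ k, m ≤ x k / y k := fun k => hk₀ k (Finset.mem_univ _)
    have hlub : ∀ k, x k / y k ≤ M := fun k => hk₁ k (Finset.mem_univ _)
    have hMmα : M / m ≤ α := by
      have : M / m = x k₁ * y k₀ / (x k₀ * y k₁) := by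
        rw [hm, hM]
        field_simp
      rw [this]
      exact le_hpSup x y k₁ k₀
    rcases eq_or_lt_of_le hmM with hcase | hcase
    · -- proportional case : x = m • y
      have hxy : x = m • y := by
        funext k
        have h1 := hglb k
        have h2 := hlub k
        rw [← hcase] at h2
        have : x k / y k = m := le_antisymm h2 h1
        rw [Pi.smul_apply, smul_eq_mul, ← this]
        exact (div_mul_cancel₀ (x k) (ne_of_gt (hy k))).symm
      rw [hxy, Matrix.mulVec_smul]
      have h1 : ∀ i, (m • K.mulVec y) i = m * K.mulVec y i := fun i => rfl
      rw [h1, h1]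
      have hval : m * K.mulVec y i * K.mulVec y j / (m * K.mulVec y j * K.mulVec y i) = 1 := by
        rw [div_eq_one_iff_eq (ne_of_gt (mul_pos (mul_pos hm0 (hKy j)) (hKy i)))]
        ring
      rw [hval]
      calc (1:ℝ) = α ^ (0:ℝ) := (Real.rpow_zero α).symm
        _ ≤ α ^ κ := Real.rpow_le_rpow_of_exponent_le hα1 hκ0
    · -- main case m < M
      set lam : Fin R2 → ℝ := fun k => (x k / y k - m) / (M - m) with hlam
      have hMm0 : 0 < M - m := by linarith
      have hlam0 : ∀ k, 0 ≤ lam k := fun k => div_nonneg (by linarith [hglb k]) hMm0.le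
      have hlam1 : ∀ k, lam k ≤ 1 := fun k => by
        rw [hlam]
        rw [div_le_one hMm0]
        linarith [hlub k]
      have hxk : ∀ k, x k = (lam k * M + (1 - lam k) * m) * y k := by
        intro k
        have hyk := hy k
        have : lam k * M + (1 - lam k) * m = x k / y k := by
          rw [hlam]
          field_simp
          ring
        rw [this]
        field_simp
      set a : Fin R2 → ℝ := fun k => K i k with ha
      set b : Fin R2 → ℝ := fun k => K j k with hb
      set A := ∑ k, lam k * (a k * y k) with hA
      set A' := ∑ k, (1 - lam k) * (a k * y k) with hA'
      set B := ∑ k, lam k * (b k * y k) with hB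
      set B' := ∑ k, (1 - lam k) * (b k * y k) with hB'
      have hApos : 0 ≤ A := Finset.sum_nonneg fun k _ =>
        mul_nonneg (hlam0 k) (mul_nonneg (hK i k).le (hy k).le)
      have hA'pos : 0 ≤ A' := Finset.sum_nonneg fun k _ =>
        mul_nonneg (by linarith [hlam1 k]) (mul_nonneg (hK i k).le (hy k).le)
      have hBpos : 0 ≤ B := Finset.sum_nonneg fun k _ =>
        mul_nonneg (hlam0 k) (mul_nonneg (hK j k).le (hy k).le)
      have hB'pos : 0 ≤ B' := Finset.sum_nonneg fun k _ =>
        mul_nonneg (by linarith [hlam1 k]) (mul_nonneg (hK j k).le (hy k).le)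
      have hKyi : K.mulVec y i = A + A' := by
        rw [mulVec_apply', hA, hA', ← Finset.sum_add_distrib]
        apply Finset.sum_congr rfl
        intro k _
        ring
      have hKyj : K.mulVec y j = B + B' := by
        rw [mulVec_apply', hB, hB', ← Finset.sum_add_distrib]
        apply Finset.sum_congr rfl
        intro k _
        ring
      have hKxi : K.mulVec x i = M * A + m * A' := by
        rw [mulVec_apply', hA, hA', Finset.mul_sum, Finset.mul_sum, ← Finset.sum_add_distrib]
        apply Finset.sum_congr rfl
        intro k _
        rw [hxk k]
        ring
      have hKxj : K.mulVec x j = M * B + m * B' := by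
        rw [mulVec_apply', hB, hB', Finset.mul_sum, Finset.mul_sum, ← Finset.sum_add_distrib]
        apply Finset.sum_congr rfl
        intro k _
        rw [hxk k]
        ring
      have hAA : 0 < A + A' := by rw [← hKyi]; exact hKy i
      have hBB : 0 < B + B' := by rw [← hKyj]; exact hKy j
      -- the constraint
      have hcon : A * B' ≤ w^2 * (A' * B) := by
        rw [hw2]
        have hstep : A * B' ≤ ∑ k, ∑ l, ψ * ((lam k * (b k * y k)) * ((1 - lam l) * (a l * y l))) := by
          rw [hA, hB', Finset.sum_mul_sum]
          apply Finset.sum_le_sum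
          intro k _
          apply Finset.sum_le_sum
          intro l _
          have hentry : a k * b l ≤ ψ * (b k * a l) := by
            have h1 := le_psiK K i j k l
            have h2 : 0 < K j k * K i l := mul_pos (hK j k) (hK i l)
            rw [div_le_iff₀ h2] at h1
            calc a k * b l = K i k * K j l := rfl
              _ ≤ ψ * (K j k * K i l) := by linarith
              _ = ψ * (b k * a l) := rfl
          have hc : 0 ≤ lam k * (1 - lam l) * (y k * y l) :=
            mul_nonneg (mul_nonneg (hlam0 k) (by linarith [hlam1 l]))
              (mul_nonneg (hy k).le (hy l).le)
          calc lam k * (a k * y k) * ((1 - lam l) * (b l * y l))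
              = (lam k * (1 - lam l) * (y k * y l)) * (a k * b l) := by ring
            _ ≤ (lam k * (1 - lam l) * (y k * y l)) * (ψ * (b k * a l)) :=
                mul_le_mul_of_nonneg_left hentry hc
            _ = ψ * ((lam k * (b k * y k)) * ((1 - lam l) * (a l * y l))) := by ring
        calc A * B' ≤ ∑ k, ∑ l, ψ * ((lam k * (b k * y k)) * ((1 - lam l) * (a l * y l))) := hstep
          _ = ψ * ((∑ k, lam k * (b k * y k)) * (∑ l, (1 - lam l) * (a l * y l))) := by
              simp only [← Finset.mul_sum]
              rw [← Finset.sum_mul]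
          _ = ψ * (A' * B) := by rw [← hB, ← hA']; ring
      -- apply the scalar core inequality
      set u := Real.sqrt (M / m) with hu
      have hMm1 : 1 ≤ M / m := (one_le_div hm0).2 hmM
      have hu1 : 1 ≤ u := by
        rw [hu, show (1:ℝ) = Real.sqrt 1 by simp]
        exact Real.sqrt_le_sqrt hMm1
      have hu2 : u^2 = M / m := Real.sq_sqrt (by linarith)
      have hcore := core_hom u w A A' B B' hu1 hw1 hApos hA'pos hBpos hB'pos hAA hBB hcon
      have huw0 : (0:ℝ) < (u + w)^2 := by positivity
      have hstep2 : (u^2*A+A')*(B+B') ≤ ((u*w+1)/(u+w))^2 * ((u^2*B+B')*(A+A')) := by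
        rw [div_pow, div_mul_eq_mul_div, le_div_iff₀ huw0]
        calc (u^2*A+A')*(B+B') * (u+w)^2 = (u+w)^2 * ((u^2*A+A')*(B+B')) := by ring
          _ ≤ (u*w+1)^2 * ((u^2*B+B')*(A+A')) := hcore
      have hrpow : ((u*w+1)/(u+w))^2 ≤ (M/m) ^ κ := by
        have h1 := sq_ratio_le_rpow u w hu1 hw1
        have h2 : (u^2 : ℝ) ^ ((w-1)/(w+1)) = (M/m) ^ κ := by
          rw [hu2, hκ, kappaK, ← hψ, ← hw]
        rw [← h2]
        exact h1
      have hrpow2 : (M/m) ^ κ ≤ α ^ κ :=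
        Real.rpow_le_rpow (by positivity) hMmα hκ0
      have hBBnn : 0 ≤ (u^2*B+B')*(A+A') :=
        mul_nonneg (add_nonneg (mul_nonneg (sq_nonneg u) hBpos) hB'pos) hAA.le
      have hchain : (u^2*A+A')*(B+B') ≤ α ^ κ * ((u^2*B+B')*(A+A')) := by
        calc (u^2*A+A')*(B+B') ≤ ((u*w+1)/(u+w))^2 * ((u^2*B+B')*(A+A')) := hstep2
          _ ≤ (M/m) ^ κ * ((u^2*B+B')*(A+A')) := mul_le_mul_of_nonneg_right hrpow hBBnn
          _ ≤ α ^ κ * ((u^2*B+B')*(A+A')) := mul_le_mul_of_nonneg_right hrpow2 hBBnn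
      -- convert to M, m form
      have htarget : (M*A + m*A')*(B+B') ≤ α ^ κ * ((M*B + m*B')*(A+A')) := by
        have hmul := mul_le_mul_of_nonneg_left hchain hm0.le
        have hMum : M = u^2 * m := by rw [hu2]; field_simp
        have e1 : m * ((u^2*A+A')*(B+B')) = (M*A + m*A')*(B+B') := by
          rw [hMum]; ring
        have e2 : m * (α ^ κ * ((u^2*B+B')*(A+A'))) = α ^ κ * ((M*B + m*B')*(A+A')) := by
          rw [hMum]; ring
        rw [e1, e2] at hmul
        exact hmul
      have hd1 : 0 < M * B + m * B' := by rw [← hKxj]; exact hKx j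
      rw [hKxi, hKxj, hKyi, hKyj, div_le_iff₀ (mul_pos hd1 hAA)]
      exact htarget
  -- conclude
  rw [dHP_eq, dHP_eq]
  have h1 : hpSup (K.mulVec x) (K.mulVec y) ≤ α ^ κ := hpSup_le _ _ _ claim
  have h2 : 0 < hpSup (K.mulVec x) (K.mulVec y) := by
    have := one_le_hpSup (K.mulVec x) (K.mulVec y) hKx hKy
    linarith
  calc Real.log (hpSup (K.mulVec x) (K.mulVec y)) ≤ Real.log (α ^ κ) :=
        Real.log_le_log h2 h1
    _ = κ * Real.log α := Real.log_rpow hα0 κ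

/-- One full Sinkhorn iteration contracts the Hilbert projective metric with ratio
`κ(K)²`: if `(u*, v*)` is a Sinkhorn fixed point, `u⁺ = μ ./ (K v)` and
`v⁺ = ν ./ (Kᵀ u⁺)`, then `d_HP(v⁺, v*) ≤ κ(K)² d_HP(v, v*)`. -/
theorem sinkhorn_full_step_contraction {R1 R2 : ℕ}
    [Nonempty (Fin R1)] [Nonempty (Fin R2)]
    (K : Matrix (Fin R1) (Fin R2) ℝ) (hK : ∀ i j, 0 < K i j)
    (μ : Fin R1 → ℝ) (ν : Fin R2 → ℝ)
    (hμpos : ∀ m, 0 < μ m) (hνpos : ∀ n, 0 < ν n)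
    (ustar : Fin R1 → ℝ) (vstar : Fin R2 → ℝ)
    (hustar_pos : ∀ m, 0 < ustar m) (hvstar_pos : ∀ n, 0 < vstar n)
    (hustar : ∀ m, ustar m = μ m / K.mulVec vstar m)
    (hvstar : ∀ n, vstar n = ν n / K.transpose.mulVec ustar n)
    (v : Fin R2 → ℝ) (hv : ∀ n, 0 < v n)
    (uplus : Fin R1 → ℝ) (huplus : ∀ m, uplus m = μ m / K.mulVec v m)
    (vplus : Fin R2 → ℝ) (hvplus : ∀ n, vplus n = ν n / K.transpose.mulVec uplus n) :
    dHP vplus vstar ≤ kappaK K ^ 2 * dHP v vstar := by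
  classical
  have hKT : ∀ i j, 0 < K.transpose i j := fun i j => hK j i
  have hKv : ∀ m, 0 < K.mulVec v m := mulVec_pos K hK v hv
  have hKvs : ∀ m, 0 < K.mulVec vstar m := mulVec_pos K hK vstar hvstar_pos
  have hup : ∀ m, 0 < uplus m := fun m => by
    rw [huplus m]; exact div_pos (hμpos m) (hKv m)
  have hKTup : ∀ n, 0 < K.transpose.mulVec uplus n := mulVec_pos _ hKT uplus hup
  have hKTus : ∀ n, 0 < K.transpose.mulVec ustar n := mulVec_pos _ hKT ustar hustar_pos
  have hκ0 : 0 ≤ kappaK K := kappaK_nonneg K hK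
  have e1 : dHP vplus vstar = dHP (K.transpose.mulVec uplus) (K.transpose.mulVec ustar) := by
    have h1 : vplus = fun n => ν n / K.transpose.mulVec uplus n := funext hvplus
    have h2 : vstar = fun n => ν n / K.transpose.mulVec ustar n := funext hvstar
    rw [h1, h2]
    exact dHP_div_eq ν (K.transpose.mulVec uplus) (K.transpose.mulVec ustar) hνpos hKTup hKTus
  have e2 : dHP (K.transpose.mulVec uplus) (K.transpose.mulVec ustar)
      ≤ kappaK K.transpose * dHP uplus ustar :=
    birkhoff_step K.transpose hKT uplus ustar hup hustar_pos
  have e3 : dHP uplus ustar = dHP (K.mulVec v) (K.mulVec vstar) := by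
    have h1 : uplus = fun m => μ m / K.mulVec v m := funext huplus
    have h2 : ustar = fun m => μ m / K.mulVec vstar m := funext hustar
    rw [h1, h2]
    exact dHP_div_eq μ (K.mulVec v) (K.mulVec vstar) hμpos hKv hKvs
  have e4 : dHP (K.mulVec v) (K.mulVec vstar) ≤ kappaK K * dHP v vstar :=
    birkhoff_step K hK v vstar hv hvstar_pos
  calc dHP vplus vstar = dHP (K.transpose.mulVec uplus) (K.transpose.mulVec ustar) := e1
    _ ≤ kappaK K.transpose * dHP uplus ustar := e2
    _ = kappaK K * dHP (K.mulVec v) (K.mulVec vstar) := by rw [kappaK_transpose, e3]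
    _ ≤ kappaK K * (kappaK K * dHP v vstar) := mul_le_mul_of_nonneg_left e4 hκ0
    _ = kappaK K ^ 2 * dHP v vstar := by ring
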